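/- Fix n ≥ 1, 1 ≤ i ≤ n, and signs δ = (δ_0,…,δ_n) ∈ {±1}^{n+1}. Define s on the half-space {(x_0,x) ∈ ℝ × ℝⁿ : δ_0 x_0 ≥ 0} by s(x_0, x_1, x_2, …, x_n) = (x_0, δ_0δ_1(x_1 + δ_1√(δ_0 x_0)), x_2, …, x_n). Then s maps the set ⁿΓ_i|_δ := {(x_0,x) : x_0 = δ_0 h_i(x)², and δ_k h_{i,k−1}(x) ≤ 0 for k = 1,…,i} bijectively onto the set {(x_0,x) : δ_0 x_0 ≥ 0, x_1 = δ_0δ_1 · h_{i,1}(x)², and δ_{k+1} h_{i,k}(x) ≤ 0 for k = 1,…,i−1}, i.e. onto (δ_0 ℝ_{≥0}) × ⁿ⁻¹Γ_{i−1}|_{δ'} where δ' = (δ_0δ_1, δ_2, …, δ_n) and ⁿ⁻¹Γ_{i−1}|_{δ'} is the analogous restricted signed graph in the coordinates (x_1; x_2,…,x_n) with x_1 as vertical coordinate. -/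

import Mathlib

open scoped ContDiff

noncomputable section

/-- The polynomial `h_i` in the variables `x_1, …, x_i` (0-indexed: it depends on
coordinates `0, …, i-1`): `h_0 = 0`, `h_{i+1}(x) = x 0 - (h_i (x ∘ (·+1)))^2`. -/
def hpoly : ℕ → (ℕ → ℝ) → ℝ
  | 0, _ => 0
  | i + 1, x => x 0 - (hpoly i fun k => x (k + 1)) ^ 2

/-- Extension of a vector of `ℝⁿ` by zeros to an infinite sequence. -/
def extv {n : ℕ} (x : Fin n → ℝ) : ℕ → ℝ := fun k => if h : k < n then x ⟨k, h⟩ else 0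

/-- `h_{i,j}` as a function on `ℝⁿ` (0-indexed: it depends on coordinates `j, …, i-1`;
in the paper's notation `h_{i,j}(x) = h_{i-j}(x_{j+1}, …, x_i)`). -/
def hh (n i j : ℕ) (x : Fin n → ℝ) : ℝ := hpoly (i - j) fun k => extv x (j + k)

/-- The gradient of a function on `ℝⁿ`, via the Fréchet derivative. -/
def grad {n : ℕ} (f : (Fin n → ℝ) → ℝ) (x : Fin n → ℝ) : Fin n → ℝ :=
  fun k => fderiv ℝ f x (Pi.single k 1)

/-- The `m`-th standard basis vector of `ℝⁿ` (zero if `m ≥ n`). -/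
def evec (n m : ℕ) : Fin n → ℝ := fun k => if (k : ℕ) = m then 1 else 0

lemma hh_zero_eq' {n i : ℕ} (hi : 1 ≤ i) (x : Fin n → ℝ) :
    hh n i 0 x = extv x 0 - (hh n i 1 x) ^ 2 := by
  obtain ⟨m, rfl⟩ : ∃ m, i = m + 1 := ⟨i - 1, by omega⟩
  have h1 : (fun k => extv x (1 + k)) = (fun k => extv x (k + 1)) := by
    funext k; congr 1; omega
  simp only [hh, Nat.sub_zero, Nat.add_sub_cancel, hpoly, Nat.zero_add, h1]

lemma hh_update' {n i j : ℕ} (hn : 1 ≤ n) (hj : 1 ≤ j) (x : Fin n → ℝ) (v : ℝ) :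
    hh n i j (Function.update x ⟨0, hn⟩ v) = hh n i j x := by
  simp only [hh]
  congr 1
  funext k
  simp only [extv]
  split_ifs with h
  · exact Function.update_of_ne (by simp [Fin.ext_iff]; omega) _ _
  · rfl

lemma extv_zero' {n : ℕ} (hn : 1 ≤ n) (x : Fin n → ℝ) : extv x 0 = x ⟨0, hn⟩ := by
  simp only [extv]
  exact dif_pos hn

/-- Fix `n ≥ 1`, `1 ≤ i ≤ n`, signs `δ ∈ {±1}^{n+1}`, and the map
`s(x_0, x) = (x_0, δ_0δ_1(x_1 + δ_1√(δ_0 x_0)), x_2, …, x_n)` on the half-space `δ_0 x_0 ≥ 0`.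
Then `s` maps `ⁿΓ_i|_δ = {x_0 = δ_0 h_i(x)², δ_k h_{i,k-1}(x) ≤ 0 (k = 1, …, i)}` bijectively
onto `{δ_0 x_0 ≥ 0, x_1 = δ_0δ_1 h_{i,1}(x)², δ_{k+1} h_{i,k}(x) ≤ 0 (k = 1, …, i-1)}`,
i.e. onto `(δ_0 ℝ_{≥0}) × ⁿ⁻¹Γ_{i-1}|_{δ'}` with `δ' = (δ_0δ_1, δ_2, …, δ_n)`.
(0-indexed: the paper's `x_1` is coordinate `0`.) -/
theorem stmt_4 (n i : ℕ) (hn : 1 ≤ n) (hi1 : 1 ≤ i) (hin : i ≤ n)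
    (δ : Fin (n + 1) → ℝ) (hδ : ∀ k, δ k = 1 ∨ δ k = -1)
    (s : ℝ × (Fin n → ℝ) → ℝ × (Fin n → ℝ))
    (hs : ∀ z, s z =
      (z.1, Function.update z.2 ⟨0, hn⟩
        (δ 0 * δ ⟨1, Nat.succ_lt_succ hn⟩ *
          (z.2 ⟨0, hn⟩ + δ ⟨1, Nat.succ_lt_succ hn⟩ * Real.sqrt (δ 0 * z.1))))) :
    s '' {z : ℝ × (Fin n → ℝ) |
        z.1 = δ 0 * (hh n i 0 z.2) ^ 2 ∧
        ∀ j : ℕ, ∀ hj : j < i,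
          δ ⟨j + 1, Nat.succ_lt_succ (lt_of_lt_of_le hj hin)⟩ * hh n i j z.2 ≤ 0}
      = {z : ℝ × (Fin n → ℝ) |
          δ 0 * z.1 ≥ 0 ∧
          z.2 ⟨0, hn⟩ = δ 0 * δ ⟨1, Nat.succ_lt_succ hn⟩ * (hh n i 1 z.2) ^ 2 ∧
          ∀ j : ℕ, 1 ≤ j → ∀ hj : j < i,
            δ ⟨j + 1, Nat.succ_lt_succ (lt_of_lt_of_le hj hin)⟩ * hh n i j z.2 ≤ 0} ∧
    Set.InjOn s {z : ℝ × (Fin n → ℝ) |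
        z.1 = δ 0 * (hh n i 0 z.2) ^ 2 ∧
        ∀ j : ℕ, ∀ hj : j < i,
          δ ⟨j + 1, Nat.succ_lt_succ (lt_of_lt_of_le hj hin)⟩ * hh n i j z.2 ≤ 0} := by
  have hc0sq : δ 0 * δ 0 = 1 := by rcases hδ 0 with h | h <;> rw [h] <;> norm_num
  have hc1sq : δ ⟨1, Nat.succ_lt_succ hn⟩ * δ ⟨1, Nat.succ_lt_succ hn⟩ = 1 := by
    rcases hδ ⟨1, Nat.succ_lt_succ hn⟩ with h | h <;> rw [h] <;> norm_num
  have habs1 : |δ ⟨1, Nat.succ_lt_succ hn⟩| = 1 := by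
    rcases hδ ⟨1, Nat.succ_lt_succ hn⟩ with h | h <;> rw [h] <;> norm_num
  constructor
  · ext z
    simp only [Set.mem_image, Set.mem_setOf_eq]
    constructor
    · rintro ⟨w, ⟨hw1, hw2⟩, rfl⟩
      rw [hs w]
      set c0 := δ 0 with hc0def
      set c1 := δ ⟨1, Nat.succ_lt_succ hn⟩ with hc1def
      set h := hh n i 0 w.2 with hdef
      have hpos : c0 * w.1 = h ^ 2 := by
        rw [hw1, ← mul_assoc, hc0sq, one_mul]
      have hsq : Real.sqrt (c0 * w.1) = |h| := by rw [hpos, Real.sqrt_sq_eq_abs]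
      have hδ1h : c1 * h ≤ 0 := by simpa using hw2 0 hi1
      have key : c1 * |h| = -h := by
        have h1 : |h| = -(c1 * h) := by
          rw [← abs_of_nonpos hδ1h, abs_mul, habs1, one_mul]
        rw [h1]
        linear_combination (-h) * hc1sq
      have hh0 : h = w.2 ⟨0, hn⟩ - (hh n i 1 w.2) ^ 2 := by
        rw [hdef, hh_zero_eq' hi1, extv_zero' hn]
      refine ⟨?_, ?_, ?_⟩
      · rw [hpos]; positivity
      · simp only [Function.update_self, hh_update' hn le_rfl, hsq, key]
        rw [hh0]; ring
      · intro j hj1 hji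
        simp only [hh_update' hn hj1]
        exact hw2 j hji
    · rintro ⟨hz1, hz2, hz3⟩
      set c0 := δ 0 with hc0def
      set c1 := δ ⟨1, Nat.succ_lt_succ hn⟩ with hc1def
      set S := Real.sqrt (c0 * z.1) with hSdef
      set b := hh n i 1 z.2 with hbdef
      set v := c0 * c1 * z.2 ⟨0, hn⟩ - c1 * S with hvdef
      refine ⟨(z.1, Function.update z.2 ⟨0, hn⟩ v), ⟨?_, ?_⟩, ?_⟩
      · -- z.1 = c0 * (hh n i 0 …)^2
        have hhw : hh n i 0 (Function.update z.2 ⟨0, hn⟩ v) = -(c1 * S) := by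
          rw [hh_zero_eq' hi1, extv_zero' hn, Function.update_self,
            hh_update' hn le_rfl, hvdef, hz2, ← hbdef]
          linear_combination (b ^ 2 * c1 * c1) * hc0sq + b ^ 2 * hc1sq
        rw [hhw]
        have hS2 : S ^ 2 = c0 * z.1 := Real.sq_sqrt hz1
        linear_combination (-(c0 * c1 * c1)) * hS2 + (-(z.1) * c1 * c1) * hc0sq +
          (-z.1) * hc1sq
      · intro j hji
        rcases Nat.eq_zero_or_pos j with rfl | hj1
        · have hhw : hh n i 0 (Function.update z.2 ⟨0, hn⟩ v) = -(c1 * S) := by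
            rw [hh_zero_eq' hi1, extv_zero' hn, Function.update_self,
              hh_update' hn le_rfl, hvdef, hz2, ← hbdef]
            linear_combination (b ^ 2 * c1 * c1) * hc0sq + b ^ 2 * hc1sq
          have : c1 * -(c1 * S) = -S := by linear_combination (-S) * hc1sq
          have hS0 : 0 ≤ S := Real.sqrt_nonneg _
          show c1 * hh n i 0 (Function.update z.2 ⟨0, hn⟩ v) ≤ 0
          rw [hhw, this]; linarith
        · simp only [hh_update' hn hj1]
          exact hz3 j hj1 hji
      · rw [hs]
        simp only [Function.update_self, Function.update_idem]
        have hv : c0 * c1 * (v + c1 * S) = z.2 ⟨0, hn⟩ := by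
          rw [hvdef]
          linear_combination (z.2 ⟨0, hn⟩ * c1 * c1) * hc0sq + z.2 ⟨0, hn⟩ * hc1sq
        rw [hv, Function.update_eq_self]
  · intro a _ b _ hab
    rw [hs a, hs b] at hab
    simp only [Prod.mk.injEq] at hab
    obtain ⟨h1, h2⟩ := hab
    have h0 : a.2 ⟨0, hn⟩ = b.2 ⟨0, hn⟩ := by
      have h3 := congrFun h2 ⟨0, hn⟩
      simp only [Function.update_self, h1] at h3
      linear_combination (δ 0 * δ ⟨1, Nat.succ_lt_succ hn⟩) * h3 +
        ((b.2 ⟨0, hn⟩ - a.2 ⟨0, hn⟩) * δ ⟨1, Nat.succ_lt_succ hn⟩ *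
          δ ⟨1, Nat.succ_lt_succ hn⟩) * hc0sq +
        (b.2 ⟨0, hn⟩ - a.2 ⟨0, hn⟩) * hc1sq
    refine Prod.ext h1 (funext fun k => ?_)
    by_cases hk : k = ⟨0, hn⟩
    · rw [hk]; exact h0
    · have h3 := congrFun h2 k
      simpa only [Function.update_of_ne hk] using h3
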